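/- Let H be a finite, simple, connected graph with at least two edges, let G = L(H) be its line graph with vertex set V, let A be the adjacency matrix of G, and let Δ = deg_max(G). Then for every p ∈ [2,∞] and every t ≥ 0, the operator norm of exp(−tA) on ℓ^p(V) satisfies ‖exp(−tA)‖_{L(ℓ^p)} ≤ exp(t·(4/p + (1 − 2/p)·Δ)) (for p = ∞ the exponent is read as t·Δ). -/

import Mathlib

open scoped ENNReal

open Real Finset
open scoped NNReal Nat ENNReal

namespace LGexp


/-- Bernoulli-type: for `0 ≤ r ≤ 1`, `0 ≤ θ ≤ 1`, `r ^ θ ≤ 1 - θ * (1 - r)`. -/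
lemma bern {r θ : ℝ} (hr0 : 0 ≤ r) (hr1 : r ≤ 1) (hθ0 : 0 ≤ θ) (hθ1 : θ ≤ 1) :
    r ^ θ ≤ 1 - θ * (1 - r) := by
  have h := Real.geom_mean_le_arith_mean2_weighted (w₁ := θ) (w₂ := 1 - θ) (p₁ := r)
    (p₂ := 1) hθ0 (by linarith) hr0 zero_le_one (by ring)
  rw [Real.one_rpow, mul_one] at h
  linarith

/-- Stroock–Varopoulos with constant θ. -/
lemma sv {a b θ : ℝ} (ha : 0 ≤ a) (hb : 0 ≤ b) (hθ : 0 < θ) (hθ1 : θ ≤ 1) :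
    θ * (a - b) ^ 2 ≤ (a ^ θ - b ^ θ) * (a ^ (2 - θ) - b ^ (2 - θ)) := by
  wlog hab : b ≤ a with H
  · have := H hb ha hθ hθ1 (le_of_not_ge hab)
    calc θ * (a - b) ^ 2 = θ * (b - a) ^ 2 := by ring
    _ ≤ (b ^ θ - a ^ θ) * (b ^ (2 - θ) - a ^ (2 - θ)) := this
    _ = (a ^ θ - b ^ θ) * (a ^ (2 - θ) - b ^ (2 - θ)) := by ring
  rcases eq_or_lt_of_le ha with h0 | h0
  · have hb0 : b = 0 := le_antisymm (hab.trans h0.symm.le) hb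
    rw [← h0, hb0]
    simp [Real.zero_rpow hθ.ne', Real.zero_rpow (by linarith : (2:ℝ) - θ ≠ 0)]
  -- a > 0
  set r := b / a with hr
  have hr0 : 0 ≤ r := div_nonneg hb ha
  have hr1 : r ≤ 1 := div_le_one_of_le₀ hab ha
  have hbra : b = r * a := by rw [hr, div_mul_cancel₀ b h0.ne']
  have key1 : θ * (1 - r) ≤ 1 - r ^ θ := by
    have := bern hr0 hr1 hθ.le hθ1; linarith
  have key2 : 1 - r ≤ 1 - r ^ (2 - θ) := by
    have : r ^ (2 - θ) ≤ r := by
      rcases eq_or_lt_of_le hr0 with h | h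
      · rw [← h, Real.zero_rpow (by linarith : (2:ℝ) - θ ≠ 0)]
      · calc r ^ (2 - θ) ≤ r ^ (1:ℝ) :=
            Real.rpow_le_rpow_of_exponent_ge h hr1 (by linarith)
        _ = r := Real.rpow_one r
    linarith
  have hmul : (θ * (1 - r)) * (1 - r) ≤ (1 - r ^ θ) * (1 - r ^ (2 - θ)) := by
    apply mul_le_mul key1 key2 (by linarith) (by nlinarith)
  have expand : (a ^ θ - b ^ θ) * (a ^ (2 - θ) - b ^ (2 - θ))
      = (1 - r ^ θ) * (1 - r ^ (2 - θ)) * (a ^ θ * a ^ (2 - θ)) := by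
    rw [hbra, Real.mul_rpow hr0 ha, Real.mul_rpow hr0 ha]; ring
  have haa : a ^ θ * a ^ (2 - θ) = a ^ (2:ℝ) := by
    rw [← Real.rpow_add h0]; ring_nf
  have ha2 : a ^ (2:ℝ) = a ^ 2 := by
    rw [Real.rpow_two]
  rw [expand, haa, ha2]
  have hsq : (a - b) ^ 2 = (1 - r) ^ 2 * a ^ 2 := by rw [hbra]; ring
  rw [hsq]
  calc θ * ((1 - r) ^ 2 * a ^ 2) = ((θ * (1 - r)) * (1 - r)) * a ^ 2 := by ring
  _ ≤ (1 - r ^ θ) * (1 - r ^ (2 - θ)) * a ^ 2 := by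
      apply mul_le_mul_of_nonneg_right hmul (by positivity)

/-- AM–GM cross term. -/
lemma amgm2 {a b θ : ℝ} (ha : 0 ≤ a) (hb : 0 ≤ b) (hθ : 0 < θ) (hθ1 : θ ≤ 1) :
    2 * (a * b) ≤ a ^ θ * b ^ (2 - θ) + a ^ (2 - θ) * b ^ θ := by
  have h2θ : (0:ℝ) < 2 - θ := by linarith
  set c := a ^ (θ/2) * b ^ ((2-θ)/2) with hc
  set d := a ^ ((2-θ)/2) * b ^ (θ/2) with hd
  have e1 : θ/2 + (2-θ)/2 = (1:ℝ) := by ring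
  have e2 : (2-θ)/2 + θ/2 = (1:ℝ) := by ring
  have hcd : c * d = a * b := by
    rw [hc, hd]
    have h1 : a ^ (θ/2) * a ^ ((2-θ)/2) = a := by
      rw [← Real.rpow_add' ha (by rw [e1]; norm_num), e1, Real.rpow_one]
    have h2 : b ^ ((2-θ)/2) * b ^ (θ/2) = b := by
      rw [← Real.rpow_add' hb (by rw [e2]; norm_num), e2, Real.rpow_one]
    calc a ^ (θ/2) * b ^ ((2-θ)/2) * (a ^ ((2-θ)/2) * b ^ (θ/2))
        = (a ^ (θ/2) * a ^ ((2-θ)/2)) * (b ^ ((2-θ)/2) * b ^ (θ/2)) := by ring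
      _ = a * b := by rw [h1, h2]
  have hc2 : c ^ 2 = a ^ θ * b ^ (2-θ) := by
    rw [hc, mul_pow, ← Real.rpow_natCast (a ^ (θ/2)) 2, ← Real.rpow_natCast (b ^ ((2-θ)/2)) 2,
      ← Real.rpow_mul ha, ← Real.rpow_mul hb]
    norm_num
  have hd2 : d ^ 2 = a ^ (2-θ) * b ^ θ := by
    rw [hd, mul_pow, ← Real.rpow_natCast (a ^ ((2-θ)/2)) 2, ← Real.rpow_natCast (b ^ (θ/2)) 2,
      ← Real.rpow_mul ha, ← Real.rpow_mul hb]
    norm_num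
  calc 2 * (a * b) = 2 * c * d := by rw [← hcd]; ring
  _ ≤ c ^ 2 + d ^ 2 := two_mul_le_add_sq c d
  _ = a ^ θ * b ^ (2-θ) + a ^ (2-θ) * b ^ θ := by rw [hc2, hd2]

section core
variable {q x y : ℝ}

lemma core_facts (hq : 2 ≤ q) (hx : 0 ≤ x) :
    (x ^ (q/2)) ^ (2/q) = x ∧ (x ^ (q/2)) ^ (2 - 2/q) = x ^ (q-1) ∧
      (x ^ (q/2)) ^ 2 = x ^ q := by
  have hq0 : (0:ℝ) < q := by linarith
  refine ⟨?_, ?_, ?_⟩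
  · rw [← Real.rpow_mul hx]
    rw [show q/2 * (2/q) = (1:ℝ) by field_simp]
    exact Real.rpow_one x
  · rw [← Real.rpow_mul hx]
    congr 1
    field_simp
  · rw [← Real.rpow_natCast (x ^ (q/2)) 2, ← Real.rpow_mul hx]
    congr 1
    push_cast; field_simp

/-- opposite-sign core inequality -/
lemma core2 (hq : 2 ≤ q) (hx : 0 ≤ x) (hy : 0 ≤ y) :
    x * y ^ (q-1) + y * x ^ (q-1) ≤
      (1 - 2/q) * (x ^ q + y ^ q) + (4/q) * (x ^ (q/2) * y ^ (q/2)) := by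
  have hq0 : (0:ℝ) < q := by linarith
  have hθ0 : (0:ℝ) < 2/q := by positivity
  have hθ1 : 2/q ≤ (1:ℝ) := by rw [div_le_one hq0]; linarith
  obtain ⟨ex1, ex2, ex3⟩ := core_facts hq hx
  obtain ⟨ey1, ey2, ey3⟩ := core_facts hq hy
  have h := sv (Real.rpow_nonneg hx (q/2)) (Real.rpow_nonneg hy (q/2)) hθ0 hθ1
  rw [ex1, ey1, ex2, ey2] at h
  have hexp : (x ^ (q/2) - y ^ (q/2))^2
      = x ^ q + y ^ q - 2 * (x ^ (q/2) * y ^ (q/2)) := by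
    rw [sub_sq, ex3, ey3]; ring
  rw [hexp] at h
  have hxx : x * x ^ (q-1) = x ^ q := by
    nth_rewrite 1 [← Real.rpow_one x]
    rw [← Real.rpow_add' hx (ne_of_gt (by linarith : (0:ℝ) < 1 + (q-1)))]
    congr 1; ring
  have hyy : y * y ^ (q-1) = y ^ q := by
    nth_rewrite 1 [← Real.rpow_one y]
    rw [← Real.rpow_add' hy (ne_of_gt (by linarith : (0:ℝ) < 1 + (q-1)))]
    congr 1; ring
  have hrhs : (x - y) * (x ^ (q-1) - y ^ (q-1))
      = x ^ q + y ^ q - (x * y ^ (q-1) + y * x ^ (q-1)) := by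
    rw [← hxx, ← hyy]; ring
  rw [hrhs] at h
  have hgoal : (1 - 2/q) * (x ^ q + y ^ q) + (4/q) * (x ^ (q/2) * y ^ (q/2))
      = x ^ q + y ^ q - 2/q * (x ^ q + y ^ q - 2 * (x ^ (q/2) * y ^ (q/2))) := by ring
  rw [hgoal]
  linarith

/-- same-sign core inequality -/
lemma core1 (hq : 2 ≤ q) (hx : 0 ≤ x) (hy : 0 ≤ y) :
    (4/q) * (x ^ (q/2) * y ^ (q/2)) ≤
      x * y ^ (q-1) + y * x ^ (q-1) + (1 - 2/q) * (x ^ q + y ^ q) := by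
  have hq0 : (0:ℝ) < q := by linarith
  have hθ0 : (0:ℝ) < 2/q := by positivity
  have hθ1 : 2/q ≤ (1:ℝ) := by rw [div_le_one hq0]; linarith
  obtain ⟨ex1, ex2, ex3⟩ := core_facts hq hx
  obtain ⟨ey1, ey2, ey3⟩ := core_facts hq hy
  have ha : (0:ℝ) ≤ x ^ (q/2) := Real.rpow_nonneg hx _
  have hb : (0:ℝ) ≤ y ^ (q/2) := Real.rpow_nonneg hy _
  have h1 := amgm2 ha hb hθ0 hθ1
  rw [ex1, ey2, ex2, ey1] at h1
  -- h1 : 2 * (x^(q/2)*y^(q/2)) ≤ x * y^(q-1) + x^(q-1) * y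
  have h2 : 2 * (x ^ (q/2) * y ^ (q/2)) ≤ x ^ q + y ^ q := by
    nlinarith [two_mul_le_add_sq (x ^ (q/2)) (y ^ (q/2)), ex3, ey3]
  have hab : (0:ℝ) ≤ x ^ (q/2) * y ^ (q/2) := mul_nonneg ha hb
  have h4q : (4:ℝ)/q = 2 * (2/q) := by ring
  nlinarith [mul_le_mul_of_nonneg_left h2 (by linarith : (0:ℝ) ≤ 1 - 2/q),
    mul_nonneg (by rw [h4q]; linarith : (0:ℝ) ≤ 2 - 4/q) hab]

end core

noncomputable section defs
variable (q : ℝ)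

def Phi (a : ℝ) : ℝ := (a^2) ^ (q/2)
def Wf (a : ℝ) : ℝ := (a^2) ^ ((q-2)/2) * a
def vf (a : ℝ) : ℝ := (a^2) ^ ((q-2)/4) * a

variable {q}

lemma rpow_sq_abs (u s : ℝ) : ((u^2:ℝ)) ^ s = |u| ^ (2*s) := by
  rw [← sq_abs u, ← Real.rpow_natCast |u| 2, ← Real.rpow_mul (abs_nonneg u)]
  norm_num

lemma Phi_eq (u : ℝ) : Phi q u = |u| ^ q := by
  rw [Phi, rpow_sq_abs]; congr 1; ring

lemma Phi_nonneg (u : ℝ) : 0 ≤ Phi q u := by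
  rw [Phi_eq]; positivity

lemma vf_sq (hq : 2 ≤ q) (u : ℝ) : vf q u * vf q u = Phi q u := by
  have h2 : (0:ℝ) ≤ u^2 := sq_nonneg u
  have h21 : (u^2:ℝ) = (u^2:ℝ) ^ (1:ℝ) := (Real.rpow_one _).symm
  have m1 : (u^2:ℝ) ^ ((q-2)/4) * u^2 = (u^2) ^ ((q-2)/4 + 1) := by
    nth_rewrite 2 [h21]
    rw [← Real.rpow_add' h2 (ne_of_gt (by linarith : (0:ℝ) < (q-2)/4 + 1))]
  have m2 : (u^2:ℝ) ^ ((q-2)/4 + 1) * (u^2) ^ ((q-2)/4) = (u^2) ^ (q/2) := by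
    rw [← Real.rpow_add' h2 (ne_of_gt (by linarith : (0:ℝ) < (q-2)/4 + 1 + (q-2)/4))]
    congr 1; ring
  rw [vf, Phi]
  calc (u^2) ^ ((q-2)/4) * u * ((u^2) ^ ((q-2)/4) * u)
      = ((u^2) ^ ((q-2)/4) * u^2) * (u^2) ^ ((q-2)/4) := by ring
    _ = (u^2) ^ ((q-2)/4 + 1) * (u^2) ^ ((q-2)/4) := by rw [m1]
    _ = (u^2) ^ (q/2) := m2

/-- The pointwise two-variable inequality for arbitrary signs. -/
lemma pointwise (hq : 2 ≤ q) (u w : ℝ) :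
    (4/q) * (vf q u * vf q w) - (1 - 2/q) * (Phi q u + Phi q w) ≤
      u * Wf q w + w * Wf q u := by
  have hq0 : (0:ℝ) < q := by linarith
  set x := |u| with hxd
  set y := |w| with hyd
  have hx : 0 ≤ x := abs_nonneg u
  have hy : 0 ≤ y := abs_nonneg w
  have ePu : Phi q u = x ^ q := Phi_eq u
  have ePw : Phi q w = y ^ q := Phi_eq w
  have eWu : Wf q u = x ^ (q-2) * u := by
    rw [Wf, rpow_sq_abs]; congr 2; ring
  have eWw : Wf q w = y ^ (q-2) * w := by
    rw [Wf, rpow_sq_abs]; congr 2; ring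
  have evu : vf q u = x ^ ((q-2)/2) * u := by
    rw [vf, rpow_sq_abs]; congr 2; ring
  have evw : vf q w = y ^ ((q-2)/2) * w := by
    rw [vf, rpow_sq_abs]; congr 2; ring
  have hxq : x * x ^ ((q-2)/2) = x ^ (q/2) := by
    nth_rewrite 1 [← Real.rpow_one x]
    rw [← Real.rpow_add' hx (ne_of_gt (by linarith : (0:ℝ) < 1 + (q-2)/2))]
    congr 1; ring
  have hyq : y * y ^ ((q-2)/2) = y ^ (q/2) := by
    nth_rewrite 1 [← Real.rpow_one y]
    rw [← Real.rpow_add' hy (ne_of_gt (by linarith : (0:ℝ) < 1 + (q-2)/2))]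
    congr 1; ring
  have hxq1 : x * x ^ (q-2) = x ^ (q-1) := by
    nth_rewrite 1 [← Real.rpow_one x]
    rw [← Real.rpow_add' hx (ne_of_gt (by linarith : (0:ℝ) < 1 + (q-2)))]
    congr 1; ring
  have hyq1 : y * y ^ (q-2) = y ^ (q-1) := by
    nth_rewrite 1 [← Real.rpow_one y]
    rw [← Real.rpow_add' hy (ne_of_gt (by linarith : (0:ℝ) < 1 + (q-2)))]
    congr 1; ring
  rw [ePu, ePw, eWu, eWw, evu, evw]
  have hvv : x ^ ((q-2)/2) * u * (y ^ ((q-2)/2) * w)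
      = (u*w) * (x ^ ((q-2)/2) * y ^ ((q-2)/2)) := by ring
  have hWW : u * (y ^ (q-2) * w) + w * (x ^ (q-2) * u)
      = (u*w) * (y ^ (q-2) + x ^ (q-2)) := by ring
  rw [hvv, hWW]
  rcases le_or_gt 0 (u*w) with h | h
  · have huw : u * w = x * y := by
      rw [hxd, hyd, ← abs_mul, abs_of_nonneg h]
    rw [huw]
    have e1 : x * y * (x ^ ((q-2)/2) * y ^ ((q-2)/2)) = x ^ (q/2) * y ^ (q/2) := by
      rw [← hxq, ← hyq]; ring
    have e2 : x * y * (y ^ (q-2) + x ^ (q-2)) = x * y ^ (q-1) + y * x ^ (q-1) := by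
      rw [← hxq1, ← hyq1]; ring
    rw [e1, e2]
    have := core1 hq hx hy
    linarith
  · have huw : u * w = -(x * y) := by
      rw [hxd, hyd, ← abs_mul]
      rw [abs_of_neg h]; ring
    rw [huw]
    have e1 : -(x * y) * (x ^ ((q-2)/2) * y ^ ((q-2)/2)) = -(x ^ (q/2) * y ^ (q/2)) := by
      rw [← hxq, ← hyq]; ring
    have e2 : -(x * y) * (y ^ (q-2) + x ^ (q-2)) = -(x * y ^ (q-1) + y * x ^ (q-1)) := by
      rw [← hxq1, ← hyq1]; ring
    rw [e1, e2]
    have := core2 hq hx hy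
    linarith

end defs
section graph
variable {V : Type*} [Fintype V] [DecidableEq V] (H : SimpleGraph V) [DecidableRel H.Adj]
  [DecidableRel H.lineGraph.Adj]

lemma card_mem_sym2 (e : H.edgeSet) :
    (Finset.univ.filter (fun w : V => w ∈ (e : Sym2 V))).card = 2 := by
  obtain ⟨s, he⟩ := e
  induction s using Sym2.ind with
  | _ u w =>
    have hne : u ≠ w := fun h => H.not_isDiag_of_mem_edgeSet he (by simp [h])
    have : Finset.univ.filter (fun z : V => z ∈ (s(u, w) : Sym2 V)) = {u, w} := by
      ext z; simp [Sym2.mem_iff]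
    rw [this, Finset.card_pair hne]

lemma card_common (e f : H.edgeSet) (hne : e ≠ f) :
    ((Finset.univ.filter (fun w : V => w ∈ (e : Sym2 V) ∧ w ∈ (f : Sym2 V))).card : ℝ)
      = (H.lineGraph.adjMatrix ℝ) e f := by
  by_cases hadj : H.lineGraph.Adj e f
  · obtain ⟨hne', v₀, h1, h2⟩ := (SimpleGraph.lineGraph_adj_iff_exists).mp hadj
    have : Finset.univ.filter (fun w : V => w ∈ (e : Sym2 V) ∧ w ∈ (f : Sym2 V)) = {v₀} := by
      ext w
      simp only [Finset.mem_filter, Finset.mem_univ, true_and, Finset.mem_singleton]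
      constructor
      · rintro ⟨hw1, hw2⟩
        by_contra hwv
        exact hne' (Subtype.ext (Sym2.eq_of_ne_mem hwv hw1 h1 hw2 h2))
      · rintro rfl; exact ⟨h1, h2⟩
    rw [this, Finset.card_singleton, SimpleGraph.adjMatrix_apply, if_pos hadj]
    norm_num
  · have : Finset.univ.filter (fun w : V => w ∈ (e : Sym2 V) ∧ w ∈ (f : Sym2 V)) = ∅ := by
      ext w
      simp only [Finset.mem_filter, Finset.mem_univ, true_and, Finset.notMem_empty,
        iff_false, not_and]
      intro hw1 hw2
      exact hadj ((SimpleGraph.lineGraph_adj_iff_exists).mpr ⟨hne, w, hw1, hw2⟩)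
    rw [this, SimpleGraph.adjMatrix_apply, if_neg hadj]
    norm_num

/-- The adjacency matrix of a line graph is bounded below by `-2` as a quadratic form. -/
lemma psd (v : H.edgeSet → ℝ) :
    -2 * ∑ e, v e ^ 2 ≤ ∑ e, ∑ f, (H.lineGraph.adjMatrix ℝ) e f * (v e * v f) := by
  classical
  have h0 : (0:ℝ) ≤ ∑ w : V, (∑ e : H.edgeSet, if w ∈ (e : Sym2 V) then v e else 0)^2 :=
    Finset.sum_nonneg fun _ _ => sq_nonneg _
  have expand : ∑ w : V, (∑ e : H.edgeSet, if w ∈ (e : Sym2 V) then v e else 0)^2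
      = ∑ e : H.edgeSet, ∑ f : H.edgeSet,
          ((Finset.univ.filter (fun w : V => w ∈ (e : Sym2 V) ∧ w ∈ (f : Sym2 V))).card : ℝ)
            * (v e * v f) := by
    have step1 : ∀ w : V, (∑ e : H.edgeSet, if w ∈ (e : Sym2 V) then v e else 0)^2
        = ∑ e : H.edgeSet, ∑ f : H.edgeSet,
            (if w ∈ (e : Sym2 V) ∧ w ∈ (f : Sym2 V) then v e * v f else 0) := by
      intro w
      rw [sq, Finset.sum_mul_sum]
      refine Finset.sum_congr rfl fun e _ => Finset.sum_congr rfl fun f _ => ?_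
      by_cases h1 : w ∈ (e : Sym2 V) <;> by_cases h2 : w ∈ (f : Sym2 V) <;>
        simp [h1, h2]
    simp_rw [step1]
    rw [Finset.sum_comm]
    refine Finset.sum_congr rfl fun e _ => ?_
    rw [Finset.sum_comm]
    refine Finset.sum_congr rfl fun f _ => ?_
    rw [← Finset.sum_filter, Finset.sum_const, nsmul_eq_mul]
  rw [expand] at h0
  have split : ∀ e f : H.edgeSet,
      ((Finset.univ.filter (fun w : V => w ∈ (e : Sym2 V) ∧ w ∈ (f : Sym2 V))).card : ℝ)
          * (v e * v f)
        = (H.lineGraph.adjMatrix ℝ) e f * (v e * v f)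
          + (if e = f then 2 * v e ^ 2 else 0) := by
    intro e f
    rcases eq_or_ne e f with rfl | hne
    · rw [if_pos rfl]
      have h1 : (Finset.univ.filter (fun w : V => w ∈ (e : Sym2 V) ∧ w ∈ (e : Sym2 V)))
          = Finset.univ.filter (fun w : V => w ∈ (e : Sym2 V)) := by
        apply Finset.filter_congr; intro w _; simp
      rw [h1, card_mem_sym2 H e, SimpleGraph.adjMatrix_apply,
        if_neg (H.lineGraph.irrefl), zero_mul, zero_add]
      ring
    · rw [card_common H e f hne, if_neg hne, add_zero]
  simp_rw [split] at h0
  simp_rw [Finset.sum_add_distrib] at h0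
  simp_rw [Finset.sum_ite_eq Finset.univ] at h0
  have h2 : (∑ e : H.edgeSet, if e ∈ (Finset.univ : Finset H.edgeSet)
      then 2 * v e ^ 2 else 0) = 2 * ∑ e, v e ^ 2 := by
    simp [Finset.mul_sum]
  rw [h2] at h0
  linarith


lemma rowsum (e : H.edgeSet) :
    ∑ f, (H.lineGraph.adjMatrix ℝ) e f = (H.lineGraph.degree e : ℝ) := by
  simp only [SimpleGraph.adjMatrix_apply]
  rw [Finset.sum_boole, SimpleGraph.degree, SimpleGraph.neighborFinset_eq_filter]

lemma rowsum_le (e : H.edgeSet) :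
    ∑ f, (H.lineGraph.adjMatrix ℝ) e f ≤ (H.lineGraph.maxDegree : ℝ) := by
  rw [rowsum]
  exact_mod_cast H.lineGraph.degree_le_maxDegree e

lemma adj_nonneg (e f : H.edgeSet) : (0:ℝ) ≤ (H.lineGraph.adjMatrix ℝ) e f := by
  rw [SimpleGraph.adjMatrix_apply]
  split_ifs <;> norm_num

/-- The key dissipativity estimate. -/
lemma key {q : ℝ} (hq : 2 ≤ q) (y : H.edgeSet → ℝ) :
    -((4/q + (1 - 2/q) * (H.lineGraph.maxDegree : ℝ)) * ∑ i, Phi q (y i))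
      ≤ ∑ i, ((H.lineGraph.adjMatrix ℝ).mulVec y) i * Wf q (y i) := by
  classical
  set A := H.lineGraph.adjMatrix ℝ with hA
  set Δ : ℝ := (H.lineGraph.maxDegree : ℝ) with hΔ
  have hq0 : (0:ℝ) < q := by linarith
  have hΔ0 : 0 ≤ Δ := by positivity
  have hθ1 : 2/q ≤ (1:ℝ) := by rw [div_le_one hq0]; linarith
  set S := ∑ i, Phi q (y i) with hS
  have hS0 : 0 ≤ S := Finset.sum_nonneg fun i _ => Phi_nonneg _
  -- expand mulVec
  have hT : ∑ i, (A.mulVec y) i * Wf q (y i)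
      = ∑ i, ∑ j, A i j * (y j * Wf q (y i)) := by
    refine Finset.sum_congr rfl fun i _ => ?_
    rw [Matrix.mulVec, dotProduct, Finset.sum_mul]
    exact Finset.sum_congr rfl fun j _ => by ring
  -- symmetrization
  have hsymm : ∀ i j, A i j = A j i := by
    intro i j; rw [hA, SimpleGraph.adjMatrix_apply, SimpleGraph.adjMatrix_apply]
    simp [SimpleGraph.adj_comm]
  have hswap : ∑ i, ∑ j, A i j * (y j * Wf q (y i))
      = ∑ i, ∑ j, A i j * (y i * Wf q (y j)) := by
    rw [Finset.sum_comm]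
    refine Finset.sum_congr rfl fun i _ => Finset.sum_congr rfl fun j _ => ?_
    rw [hsymm i j]
  have h2T : 2 * ∑ i, ∑ j, A i j * (y j * Wf q (y i))
      = ∑ i, ∑ j, A i j * (y j * Wf q (y i) + y i * Wf q (y j)) := by
    rw [two_mul]
    nth_rewrite 2 [hswap]
    rw [← Finset.sum_add_distrib]
    refine Finset.sum_congr rfl fun i _ => ?_
    rw [← Finset.sum_add_distrib]
    exact Finset.sum_congr rfl fun j _ => by ring
  -- pointwise bound
  have hpt : ∑ i, ∑ j, A i j * ((4/q) * (vf q (y i) * vf q (y j))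
        - (1 - 2/q) * (Phi q (y i) + Phi q (y j)))
      ≤ ∑ i, ∑ j, A i j * (y j * Wf q (y i) + y i * Wf q (y j)) := by
    refine Finset.sum_le_sum fun i _ => Finset.sum_le_sum fun j _ => ?_
    have := pointwise hq (y i) (y j)
    have h' := mul_le_mul_of_nonneg_left this (adj_nonneg H i j)
    calc A i j * ((4/q) * (vf q (y i) * vf q (y j))
          - (1 - 2/q) * (Phi q (y i) + Phi q (y j)))
        ≤ A i j * (y i * Wf q (y j) + y j * Wf q (y i)) := h'
      _ = A i j * (y j * Wf q (y i) + y i * Wf q (y j)) := by ring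
  -- spectral bound
  have hspec : -2 * S ≤ ∑ i, ∑ j, A i j * (vf q (y i) * vf q (y j)) := by
    have := psd H (fun i => vf q (y i))
    have hv : ∑ i, vf q (y i) ^ 2 = S := by
      refine Finset.sum_congr rfl fun i _ => ?_
      rw [sq, vf_sq hq]
    rw [hv] at this
    exact this
  -- degree bound
  have hdeg : ∑ i, ∑ j, A i j * (Phi q (y i) + Phi q (y j)) ≤ 2 * Δ * S := by
    have e1 : ∑ i, ∑ j, A i j * (Phi q (y i) + Phi q (y j))
        = (∑ i, (∑ j, A i j) * Phi q (y i)) + ∑ i, (∑ j, A i j) * Phi q (y i) := by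
      have swap2 : ∑ i, ∑ j, A i j * Phi q (y j)
          = ∑ i, (∑ j, A i j) * Phi q (y i) := by
        rw [Finset.sum_comm]
        refine Finset.sum_congr rfl fun j _ => ?_
        rw [Finset.sum_mul]
        exact Finset.sum_congr rfl fun i _ => by rw [hsymm i j]
      calc ∑ i, ∑ j, A i j * (Phi q (y i) + Phi q (y j))
          = (∑ i, ∑ j, A i j * Phi q (y i)) + ∑ i, ∑ j, A i j * Phi q (y j) := by
            rw [← Finset.sum_add_distrib]
            refine Finset.sum_congr rfl fun i _ => ?_
            rw [← Finset.sum_add_distrib]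
            exact Finset.sum_congr rfl fun j _ => by ring
        _ = (∑ i, (∑ j, A i j) * Phi q (y i)) + ∑ i, (∑ j, A i j) * Phi q (y i) := by
            rw [swap2]
            congr 1
            · exact Finset.sum_congr rfl fun i _ => by rw [Finset.sum_mul]
    rw [e1]
    have hone : ∑ i, (∑ j, A i j) * Phi q (y i) ≤ Δ * S := by
      rw [hS, Finset.mul_sum]
      refine Finset.sum_le_sum fun i _ => ?_
      exact mul_le_mul_of_nonneg_right (rowsum_le H i) (Phi_nonneg _)
    linarith
  -- combine
  rw [hT]
  have hsplit : ∑ i, ∑ j, A i j * ((4/q) * (vf q (y i) * vf q (y j))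
        - (1 - 2/q) * (Phi q (y i) + Phi q (y j)))
      = (4/q) * (∑ i, ∑ j, A i j * (vf q (y i) * vf q (y j)))
        - (1 - 2/q) * (∑ i, ∑ j, A i j * (Phi q (y i) + Phi q (y j))) := by
    rw [Finset.mul_sum, Finset.mul_sum, ← Finset.sum_sub_distrib]
    refine Finset.sum_congr rfl fun i _ => ?_
    rw [Finset.mul_sum, Finset.mul_sum, ← Finset.sum_sub_distrib]
    exact Finset.sum_congr rfl fun j _ => by ring
  rw [hsplit] at hpt
  have b1 : (4/q) * (-2 * S) ≤ (4/q) * (∑ i, ∑ j, A i j * (vf q (y i) * vf q (y j))) :=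
    mul_le_mul_of_nonneg_left hspec (by positivity)
  have b2 : (1 - 2/q) * (∑ i, ∑ j, A i j * (Phi q (y i) + Phi q (y j)))
      ≤ (1 - 2/q) * (2 * Δ * S) :=
    mul_le_mul_of_nonneg_left hdeg (by linarith)
  have hfin : (4/q) * (-2*S) - (1 - 2/q) * (2*Δ*S)
      ≤ 2 * ∑ i, ∑ j, A i j * (y j * Wf q (y i)) := by
    rw [h2T]
    linarith
  nlinarith [hfin]

end graph
/-- Norm bound for the exponential in a Banach algebra. -/
lemma norm_exp_le {𝔸 : Type*} [NormedRing 𝔸] [NormedAlgebra ℝ 𝔸] [CompleteSpace 𝔸]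
    [NormOneClass 𝔸] (x : 𝔸) : ‖NormedSpace.exp x‖ ≤ Real.exp ‖x‖ := by
  rw [NormedSpace.exp_eq_tsum ℝ]
  have hsum1 : Summable fun n : ℕ => ‖((n ! : ℝ))⁻¹ • x ^ n‖ :=
    NormedSpace.norm_expSeries_summable' x
  have hsum2 : Summable fun n : ℕ => ‖x‖ ^ n / n ! := Real.summable_pow_div_factorial ‖x‖
  have h1 : ∀ n : ℕ, ‖((n ! : ℝ))⁻¹ • x ^ n‖ ≤ ‖x‖ ^ n / n ! := by
    intro n
    rw [norm_smul, norm_inv, Real.norm_natCast, div_eq_inv_mul]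
    exact mul_le_mul_of_nonneg_left (norm_pow_le x n) (by positivity)
  calc ‖∑' n : ℕ, ((n ! : ℝ))⁻¹ • x ^ n‖ ≤ ∑' n : ℕ, ‖((n ! : ℝ))⁻¹ • x ^ n‖ :=
        norm_tsum_le_tsum_norm hsum1
    _ ≤ ∑' n : ℕ, ‖x‖ ^ n / n ! := Summable.tsum_le_tsum h1 hsum1 hsum2
    _ = Real.exp ‖x‖ := by
        rw [Real.exp_eq_exp_ℝ, NormedSpace.exp_eq_tsum_div]

section matrixd
variable {n : Type*} [Fintype n] [DecidableEq n]

/-- Derivative of an entry of `exp (s • B) *ᵥ x`. -/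
lemma hasDerivAt_exp_entry (B : Matrix n n ℝ) (x : n → ℝ) (i : n) (t : ℝ) :
    HasDerivAt (fun s : ℝ => ((NormedSpace.exp (s • B)).mulVec x) i)
      (((B * NormedSpace.exp (t • B)).mulVec x) i) t := by
  letI : SeminormedRing (Matrix n n ℝ) := Matrix.linftyOpSemiNormedRing
  letI : NormedRing (Matrix n n ℝ) := Matrix.linftyOpNormedRing
  letI : NormedAlgebra ℝ (Matrix n n ℝ) := Matrix.linftyOpNormedAlgebra
  have h := hasDerivAt_exp_smul_const' (𝕂 := ℝ) B t
  let L : Matrix n n ℝ →ₗ[ℝ] ℝ :=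
    { toFun := fun M => M.mulVec x i
      map_add' := fun M N => by
        simp [Matrix.mulVec, dotProduct, add_mul, Finset.sum_add_distrib]
      map_smul' := fun c M => by
        simp [Matrix.mulVec, dotProduct, Finset.mul_sum]
        exact Finset.sum_congr rfl fun j _ => by ring }
  have hL : HasFDerivAt (fun M : Matrix n n ℝ => L M) (L.toContinuousLinearMap)
      (NormedSpace.exp (t • B)) := L.toContinuousLinearMap.hasFDerivAt
  have := hL.comp_hasDerivAt t h
  exact this

/-- ℓ∞ bound. -/
lemma linfty_bound [Nonempty n] (B : Matrix n n ℝ) {C : ℝ} (hC : 0 ≤ C)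
    (hB : ∀ i, ∑ j, |B i j| ≤ C) {t : ℝ} (ht : 0 ≤ t) (x : n → ℝ) :
    ‖(NormedSpace.exp (t • B)).mulVec x‖ ≤ Real.exp (t * C) * ‖x‖ := by
  letI : SeminormedRing (Matrix n n ℝ) := Matrix.linftyOpSemiNormedRing
  letI : NormedRing (Matrix n n ℝ) := Matrix.linftyOpNormedRing
  letI : NormedAlgebra ℝ (Matrix n n ℝ) := Matrix.linftyOpNormedAlgebra
  have hBnorm : ‖B‖ ≤ C := by
    rw [Matrix.linfty_opNorm_def]
    have h1 : (Finset.univ.sup fun i : n => ∑ j, ‖B i j‖₊) ≤ C.toNNReal := by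
      refine Finset.sup_le fun i _ => ?_
      rw [← NNReal.coe_le_coe, NNReal.coe_sum, Real.coe_toNNReal C hC]
      simpa [Real.norm_eq_abs] using hB i
    calc ((Finset.univ.sup fun i : n => ∑ j, ‖B i j‖₊ : ℝ≥0) : ℝ)
        ≤ (C.toNNReal : ℝ) := NNReal.coe_le_coe.mpr h1
      _ = C := Real.coe_toNNReal C hC
  calc ‖(NormedSpace.exp (t • B)).mulVec x‖
      ≤ ‖NormedSpace.exp (t • B)‖ * ‖x‖ := Matrix.linfty_opNorm_mulVec _ _
    _ ≤ Real.exp ‖t • B‖ * ‖x‖ :=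
        mul_le_mul_of_nonneg_right (norm_exp_le _) (norm_nonneg _)
    _ ≤ Real.exp (t * C) * ‖x‖ := by
        refine mul_le_mul_of_nonneg_right ?_ (norm_nonneg _)
        rw [Real.exp_le_exp, norm_smul, Real.norm_eq_abs, abs_of_nonneg ht]
        exact mul_le_mul_of_nonneg_left hBnorm ht

end matrixd

lemma hasDerivAt_Phi {q : ℝ} (hq : 2 ≤ q) (a : ℝ) :
    HasDerivAt (Phi q) (q * Wf q a) a := by
  have h1 : HasDerivAt (fun s : ℝ => s^2) (2*a) a := by
    simpa using hasDerivAt_pow 2 a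
  have h2 : HasDerivAt (fun u : ℝ => u ^ (q/2)) ((q/2) * (a^2) ^ (q/2 - 1)) (a^2) :=
    Real.hasDerivAt_rpow_const (Or.inr (by linarith))
  have h3 : HasDerivAt ((fun u : ℝ => u ^ (q/2)) ∘ (fun s : ℝ => s^2))
      ((q/2) * (a^2) ^ (q/2 - 1) * (2*a)) a := HasDerivAt.comp a h2 h1
  have heq : (q/2) * (a^2) ^ (q/2-1) * (2*a) = q * Wf q a := by
    rw [Wf, show q/2 - 1 = (q-2)/2 by ring]; ring
  rw [← heq]
  exact h3

section evolution
variable {V : Type*} [Fintype V] [DecidableEq V] (H : SimpleGraph V) [DecidableRel H.Adj]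
  [DecidableRel H.lineGraph.Adj]

lemma sum_Phi_evolution {q : ℝ} (hq : 2 ≤ q) (x : H.edgeSet → ℝ) {t : ℝ} (ht : 0 ≤ t) :
    ∑ i, Phi q (((NormedSpace.exp (t • (-(H.lineGraph.adjMatrix ℝ)))).mulVec x) i)
      ≤ Real.exp (q * (4/q + (1 - 2/q) * (H.lineGraph.maxDegree : ℝ)) * t)
          * ∑ i, Phi q (x i) := by
  classical
  have hq0 : (0:ℝ) < q := by linarith
  set A := H.lineGraph.adjMatrix ℝ with hA
  set c : ℝ := 4/q + (1 - 2/q) * (H.lineGraph.maxDegree : ℝ) with hc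
  set B := -A with hB
  set y : ℝ → H.edgeSet → ℝ := fun s => (NormedSpace.exp (s • B)).mulVec x with hy
  set S : ℝ → ℝ := fun s => ∑ i, Phi q (y s i) with hSdef
  set F : ℝ → ℝ := fun s => Real.exp (-(q*c*s)) * S s with hFdef
  have hyD : ∀ (s : ℝ) (i : H.edgeSet), HasDerivAt (fun u => y u i) ((B.mulVec (y s)) i) s := by
    intro s i
    have h := hasDerivAt_exp_entry B x i s
    rw [← Matrix.mulVec_mulVec] at h
    exact h
  have hSD : ∀ s, HasDerivAt S (∑ i, q * Wf q (y s i) * (B.mulVec (y s)) i) s := by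
    intro s
    exact HasDerivAt.fun_sum fun i _ => by
      have := (hasDerivAt_Phi hq (y s i)).comp s (hyD s i); exact this
  have hFD : ∀ s, HasDerivAt F (Real.exp (-(q*c*s)) * (-(q*c)) * S s
      + Real.exp (-(q*c*s)) * ∑ i, q * Wf q (y s i) * (B.mulVec (y s)) i) s := by
    intro s
    have hlin : HasDerivAt (fun u : ℝ => -(q*c*u)) (-(q*c)) s := by
      simpa using ((hasDerivAt_id s).const_mul (q*c)).fun_neg
    have he := hlin.exp
    exact he.mul (hSD s)
  have hF' : ∀ s, deriv F s ≤ 0 := by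
    intro s
    rw [(hFD s).deriv]
    have hkey := key H hq (y s)
    rw [← hA] at hkey
    have hBv : B.mulVec (y s) = -(A.mulVec (y s)) := by rw [hB, Matrix.neg_mulVec]
    have hsum : ∑ i, q * Wf q (y s i) * (B.mulVec (y s)) i
        = -(q * ∑ i, (A.mulVec (y s)) i * Wf q (y s i)) := by
      rw [Finset.mul_sum, ← Finset.sum_neg_distrib]
      refine Finset.sum_congr rfl fun i _ => ?_
      rw [hBv]; simp; ring
    rw [hsum]
    have hS0 : 0 ≤ S s := Finset.sum_nonneg fun i _ => Phi_nonneg _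
    have h2 : q * (-(c * S s)) ≤ q * ∑ i, (A.mulVec (y s)) i * Wf q (y s i) :=
      mul_le_mul_of_nonneg_left hkey (le_of_lt hq0)
    have hE0 : (0:ℝ) < Real.exp (-(q*c*s)) := Real.exp_pos _
    have hstep : -(q * ∑ i, (A.mulVec (y s)) i * Wf q (y s i)) ≤ q * c * S s := by
      nlinarith [h2]
    calc Real.exp (-(q*c*s)) * (-(q*c)) * S s
          + Real.exp (-(q*c*s)) * -(q * ∑ i, (A.mulVec (y s)) i * Wf q (y s i))
        ≤ Real.exp (-(q*c*s)) * (-(q*c)) * S s + Real.exp (-(q*c*s)) * (q * c * S s) := by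
          exact add_le_add (le_refl _) (mul_le_mul_of_nonneg_left hstep hE0.le)
      _ = 0 := by ring
  have hanti : Antitone F :=
    antitone_of_deriv_nonpos (fun s => (hFD s).differentiableAt) hF'
  have h0 : F t ≤ F 0 := hanti ht
  have hF0 : F 0 = ∑ i, Phi q (x i) := by
    have hy0 : y 0 = x := by
      rw [hy]
      simp only [zero_smul, NormedSpace.exp_zero, Matrix.one_mulVec]
    rw [hFdef]
    simp only [mul_zero, neg_zero, Real.exp_zero, one_mul, hSdef, hy0]
  rw [hF0] at h0
  have hEpos : (0:ℝ) < Real.exp (-(q*c*t)) := Real.exp_pos _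
  have hfin : S t ≤ Real.exp (q*c*t) * ∑ i, Phi q (x i) := by
    have h0' : Real.exp (-(q*c*t)) * S t ≤ ∑ i, Phi q (x i) := h0
    have h1 : S t ≤ (∑ i, Phi q (x i)) / Real.exp (-(q*c*t)) := by
      rw [le_div_iff₀ hEpos, mul_comm]; exact h0'
    calc S t ≤ (∑ i, Phi q (x i)) / Real.exp (-(q*c*t)) := h1
      _ = Real.exp (q*c*t) * ∑ i, Phi q (x i) := by
          rw [Real.exp_neg, div_eq_mul_inv, inv_inv, mul_comm]
  exact hfin

end evolution

end LGexp

open LGexp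

open scoped ENNReal

/-- Let `H` be a finite, simple, connected graph with at least two edges,
`G = L(H)` its line graph, `A` the adjacency matrix of `G`, `Δ = deg_max(G)`. For every
`p ∈ [2,∞]` and `t ≥ 0`, the operator norm of `exp (-tA)` on `ℓ^p` satisfies
`‖exp (-tA)‖ ≤ exp (t·(4/p + (1 - 2/p)·Δ))` (with `4/p = 2/p = 0` when `p = ∞`). -/
theorem lineGraph_adjMatrix_exp_neg_lp_norm_bound
    {V : Type*} [Fintype V] [DecidableEq V] (H : SimpleGraph V) [DecidableRel H.Adj]
    [DecidableRel H.lineGraph.Adj]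
    (hconn : H.Connected) (hE : 2 ≤ H.edgeFinset.card)
    (p : ℝ≥0∞) [Fact (1 ≤ p)] (hp : 2 ≤ p) (t : ℝ) (ht : 0 ≤ t) :
    ‖LinearMap.toContinuousLinearMap
        ((WithLp.linearEquiv p ℝ (H.edgeSet → ℝ)).symm.toLinearMap ∘ₗ
          (NormedSpace.exp (-(t • H.lineGraph.adjMatrix ℝ))).mulVecLin ∘ₗ
          (WithLp.linearEquiv p ℝ (H.edgeSet → ℝ)).toLinearMap)‖ ≤
      Real.exp (t * (4 / p.toReal +
        (1 - 2 / p.toReal) * (H.lineGraph.maxDegree : ℝ))) := by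
  classical
  have hne : Nonempty H.edgeSet := by
    have hcard : 0 < Fintype.card H.edgeSet := by
      have : H.edgeFinset.card = Fintype.card H.edgeSet := Set.toFinset_card _
      omega
    exact Fintype.card_pos_iff.mp hcard
  set A := H.lineGraph.adjMatrix ℝ with hA
  set Δ : ℝ := (H.lineGraph.maxDegree : ℝ) with hΔ
  have hΔ0 : 0 ≤ Δ := by positivity
  have hexp_eq : NormedSpace.exp (-(t • A)) = NormedSpace.exp (t • (-A)) := by
    rw [smul_neg]
  refine ContinuousLinearMap.opNorm_le_bound _ (Real.exp_nonneg _) fun z => ?_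
  rw [LinearMap.coe_toContinuousLinearMap']
  simp only [LinearMap.coe_comp, Function.comp_apply, LinearEquiv.coe_coe,
    WithLp.linearEquiv_apply, WithLp.linearEquiv_symm_apply, Matrix.mulVecLin_apply]
  by_cases hp' : p = ∞
  · subst hp'
    have hRHS : t * (4 / (∞ : ℝ≥0∞).toReal +
        (1 - 2 / (∞ : ℝ≥0∞).toReal) * Δ) = t * Δ := by
      rw [ENNReal.toReal_top, div_zero, div_zero]; ring
    rw [hRHS]
    have h1 : ‖(WithLp.addEquiv ∞ (↥H.edgeSet → ℝ)).invFun
        ((NormedSpace.exp (-(t • A))).mulVec ((WithLp.addEquiv ∞ (↥H.edgeSet → ℝ)).toFun z))‖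
        = ‖(NormedSpace.exp (-(t • A))).mulVec (WithLp.equiv ∞ (↥H.edgeSet → ℝ) z)‖ :=
      PiLp.norm_toLp _
    have h2 : ‖z‖ = ‖WithLp.equiv ∞ (↥H.edgeSet → ℝ) z‖ := (PiLp.norm_ofLp _).symm
    rw [h1, h2, hexp_eq]
    refine linfty_bound (-A) hΔ0 ?_ ht _
    intro i
    have : ∀ j, |(-A) i j| = A i j := by
      intro j
      rw [Matrix.neg_apply, abs_neg, abs_of_nonneg (adj_nonneg H i j)]
    calc ∑ j, |(-A) i j| = ∑ j, A i j := by
          exact Finset.sum_congr rfl fun j _ => this j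
      _ ≤ Δ := rowsum_le H i
  · -- finite p
    have hq : 2 ≤ p.toReal := by
      have h2 : ((2:ℝ≥0∞)).toReal = (2:ℝ) := by norm_num
      rw [← h2]
      exact ENNReal.toReal_mono hp' hp
    have hq0 : (0:ℝ) < p.toReal := by linarith
    set q := p.toReal with hqdef
    set c : ℝ := 4/q + (1 - 2/q) * Δ with hc
    rw [PiLp.norm_eq_sum hq0, PiLp.norm_eq_sum hq0]
    simp only [Real.norm_eq_abs]
    rw [← hqdef]
    change (∑ i, |((NormedSpace.exp (-(t • A))).mulVec (WithLp.equiv p (↥H.edgeSet → ℝ) z)) i| ^ q)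
        ^ (1/q) ≤ Real.exp (t * c) * (∑ i, |z i| ^ q) ^ (1/q)
    have hev := sum_Phi_evolution H hq (WithLp.equiv p (↥H.edgeSet → ℝ) z) ht
    rw [← hA] at hev
    rw [hexp_eq]
    have hL : ∑ i, |((NormedSpace.exp (t • (-A))).mulVec
          (WithLp.equiv p (↥H.edgeSet → ℝ) z)) i| ^ q
        = ∑ i, Phi q (((NormedSpace.exp (t • (-A))).mulVec
            (WithLp.equiv p (↥H.edgeSet → ℝ) z)) i) := by
      exact Finset.sum_congr rfl fun i _ => (Phi_eq _).symm
    have hR : ∑ i, |z i| ^ q = ∑ i, Phi q ((WithLp.equiv p (↥H.edgeSet → ℝ) z) i) := by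
      refine Finset.sum_congr rfl fun i _ => ?_
      rw [Phi_eq]
      rfl
    rw [hL, hR]
    have hS0 : (0:ℝ) ≤ ∑ i, Phi q (((NormedSpace.exp (t • (-A))).mulVec
        (WithLp.equiv p (↥H.edgeSet → ℝ) z)) i) :=
      Finset.sum_nonneg fun i _ => Phi_nonneg _
    have hSx0 : (0:ℝ) ≤ ∑ i, Phi q ((WithLp.equiv p (↥H.edgeSet → ℝ) z) i) :=
      Finset.sum_nonneg fun i _ => Phi_nonneg _
    have hmono := Real.rpow_le_rpow hS0 hev (by positivity : (0:ℝ) ≤ 1/q)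
    calc (∑ i, Phi q (((NormedSpace.exp (t • (-A))).mulVec
            (WithLp.equiv p (↥H.edgeSet → ℝ) z)) i)) ^ (1/q)
        ≤ (Real.exp (q * c * t) * ∑ i, Phi q ((WithLp.equiv p (↥H.edgeSet → ℝ) z) i))
            ^ (1/q) := hmono
      _ = Real.exp (t * c) *
            (∑ i, Phi q ((WithLp.equiv p (↥H.edgeSet → ℝ) z) i)) ^ (1/q) := by
          rw [Real.mul_rpow (Real.exp_nonneg _) hSx0, ← Real.exp_mul]
          congr 2
          field_simp
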